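/- arXiv:1510.05790 — 3 statements merged into one kernel-verified Lean document; each statement's English description precedes it below -/
import Mathlib

section
/- If ŵ = Σ^{-1} e has nonzero coordinate sum, then w* = ŵ / (Σ_i ŵ_i) maximizes the Sharpe ratio S(w) = w^T e / sqrt(w^T Σ w) over all w ∈ ℝ^n with Σ_i w_i = 1, provided Σ_i ŵ_i > 0. -/
open Matrix

/-- If `ŵ = Σ⁻¹ e` has positive coordinate sum, then `w* = ŵ / ∑ ŵᵢ` maximizes
the Sharpe ratio over all weight vectors summing to one. -/
theorem normalized_solution_maximizes_sharpe (n : ℕ)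
    (Sig : Matrix (Fin n) (Fin n) ℝ) (hSig : Sig.PosDef)
    (e : Fin n → ℝ)
    (what : Fin n → ℝ) (hwhat : what = Sig⁻¹.mulVec e)
    (hsum : 0 < ∑ i, what i) :
    ∀ w : Fin n → ℝ, ∑ i, w i = 1 →
      (w ⬝ᵥ e) / Real.sqrt (w ⬝ᵥ Sig.mulVec w) ≤
        (((∑ i, what i)⁻¹ • what) ⬝ᵥ e) /
          Real.sqrt (((∑ i, what i)⁻¹ • what) ⬝ᵥ Sig.mulVec ((∑ i, what i)⁻¹ • what)) := by
  intro w hw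
  have hdet : IsUnit Sig.det := isUnit_iff_ne_zero.mpr (ne_of_gt hSig.det_pos)
  have he : Sig.mulVec what = e := by
    rw [hwhat, Matrix.mulVec_mulVec, Matrix.mul_nonsing_inv _ hdet, Matrix.one_mulVec]
  have hpos : ∀ x : Fin n → ℝ, x ≠ 0 → 0 < x ⬝ᵥ Sig.mulVec x := by
    intro x hx
    simpa using hSig.dotProduct_mulVec_pos hx
  have hnonneg : ∀ x : Fin n → ℝ, 0 ≤ x ⬝ᵥ Sig.mulVec x := by
    intro x
    simpa using hSig.posSemidef.dotProduct_mulVec_nonneg x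
  have hT : Sigᵀ = Sig := by
    ext i j
    simpa [Matrix.conjTranspose_apply] using congrFun (congrFun hSig.1 i) j
  have hsymm : ∀ x y : Fin n → ℝ, x ⬝ᵥ Sig.mulVec y = y ⬝ᵥ Sig.mulVec x := by
    intro x y
    have hv : x ᵥ* Sig = Sig *ᵥ x := by rw [← hT, Matrix.vecMul_transpose, hT]
    rw [Matrix.dotProduct_mulVec, hv, dotProduct_comm]
  have hwhat0 : what ≠ 0 := by
    intro h
    simp [h] at hsum
  have hw0 : w ≠ 0 := by
    intro h
    simp [h] at hw
  set a := w ⬝ᵥ Sig.mulVec w with ha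
  set b := w ⬝ᵥ Sig.mulVec what with hb
  set c := what ⬝ᵥ Sig.mulVec what with hc
  have hapos : 0 < a := hpos w hw0
  have hcpos : 0 < c := hpos what hwhat0
  -- Cauchy-Schwarz: b^2 ≤ a * c
  have hcs : b ^ 2 ≤ a * c := by
    have hq := hnonneg (a • what - b • w)
    have hexp : (a • what - b • w) ⬝ᵥ Sig.mulVec (a • what - b • w)
        = a * a * c - 2 * a * b * b + b * b * a := by
      simp only [Matrix.mulVec_sub, Matrix.mulVec_smul, sub_dotProduct,
        dotProduct_sub, smul_dotProduct, dotProduct_smul,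
        smul_eq_mul]
      rw [hsymm what w]
      ring
    rw [hexp] at hq
    nlinarith
  -- RHS simplification
  set s := ∑ i, what i with hs
  have hrhsnum : ((s⁻¹ • what) ⬝ᵥ e) = s⁻¹ * c := by
    rw [← he, smul_dotProduct, smul_eq_mul]
  have hrhsden : ((s⁻¹ • what) ⬝ᵥ Sig.mulVec (s⁻¹ • what)) = s⁻¹ * s⁻¹ * c := by
    simp only [Matrix.mulVec_smul, smul_dotProduct, dotProduct_smul,
      smul_eq_mul]
    ring
  have hsinv : 0 < s⁻¹ := inv_pos.mpr hsum
  have hrhs : (((s⁻¹ • what) ⬝ᵥ e) /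
      Real.sqrt ((s⁻¹ • what) ⬝ᵥ Sig.mulVec (s⁻¹ • what))) = Real.sqrt c := by
    rw [hrhsnum, hrhsden]
    rw [show s⁻¹ * s⁻¹ * c = s⁻¹ ^ 2 * c by ring, Real.sqrt_mul (by positivity),
      Real.sqrt_sq hsinv.le, mul_div_mul_left _ _ (ne_of_gt hsinv), Real.div_sqrt]
  rw [hrhs]
  -- LHS bound
  have hlhs : w ⬝ᵥ e = b := by rw [← he]
  rw [hlhs]
  rw [div_le_iff₀ (Real.sqrt_pos.mpr hapos)]
  calc b ≤ |b| := le_abs_self b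
    _ = Real.sqrt (b ^ 2) := (Real.sqrt_sq_eq_abs b).symm
    _ ≤ Real.sqrt (a * c) := Real.sqrt_le_sqrt hcs
    _ = Real.sqrt c * Real.sqrt a := by
        rw [Real.sqrt_mul hapos.le, mul_comm]
end

section
/- Let Σ be symmetric positive definite with Cholesky factorization Σ = L L^T (L lower triangular with positive diagonal). Suppose P ∪ {k} indexes coordinates, w solves Σ_{P∪{k}} w = (e_P; e_k + μ̂_k) with w_k = 0, and x solves Σ_{P∪{k}} x = (e_P; e_k). If k is the last index in the ordering, then x_k = -μ̂_k (Σ_{P∪{k}}^{-1})_{kk}; in particular, if μ̂_k < 0 then x_k > 0. -/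
open Matrix

/-- Key active-set step: if `A w = b + μ̂ e_k` with `w_k = 0` and `A x = b`
(`k` the last index of the symmetric positive definite matrix `A = Σ_{P∪{k}}`),
then `x_k = -μ̂ (A⁻¹)_{kk}`; in particular `μ̂ < 0` implies `x_k > 0`. -/
theorem active_set_entering_variable (m : ℕ)
    (A : Matrix (Fin (m + 1)) (Fin (m + 1)) ℝ) (hA : A.PosDef)
    (k : Fin (m + 1)) (hk : k = Fin.last m)
    (b w x : Fin (m + 1) → ℝ) (μhat : ℝ)
    (hw : A.mulVec w = Function.update b k (b k + μhat))
    (hwk : w k = 0)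
    (hx : A.mulVec x = b) :
    x k = -μhat * A⁻¹ k k ∧ (μhat < 0 → 0 < x k) := by
  have hU : IsUnit A := hA.isUnit
  have hinv : A⁻¹.PosDef := hA.inv
  have hdiff : A.mulVec (w - x) = Pi.single k μhat := by
    rw [mulVec_sub, hw, hx]
    funext i
    by_cases h : i = k
    · subst h; simp [Function.update_self]
    · simp [Function.update_of_ne h, Pi.single_eq_of_ne h]
  have hwx : w - x = A⁻¹.mulVec (Pi.single k μhat) := by
    have h2 := congrArg (A⁻¹.mulVec) hdiff
    rwa [Matrix.mulVec_mulVec,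
      Matrix.nonsing_inv_mul _ ((isUnit_iff_isUnit_det _).1 hU), Matrix.one_mulVec] at h2
  have hxk : x k = -μhat * A⁻¹ k k := by
    have h3 := congrFun hwx k
    rw [Matrix.mulVec_single] at h3
    simp only [Pi.sub_apply, hwk, Pi.smul_apply, Matrix.col_apply, MulOpposite.smul_eq_mul_unop,
      MulOpposite.unop_op] at h3
    linarith [h3]
  refine ⟨hxk, fun hμ => ?_⟩
  have hpos : 0 < A⁻¹ k k := by
    have h4 := hinv.dotProduct_mulVec_pos (x := Pi.single k 1) (by
      intro h
      have := congrFun h k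
      simp at this)
    simpa [dotProduct, Matrix.mulVec_single, Pi.single_apply] using h4
  rw [hxk]
  nlinarith
end

section
/- For the quadratic reformulation: if w* solves min w^T Σ w subject to w^T e = z and w ≥ 0 (for fixed z > 0), and Σ_i w*_i > 0, then w*/(Σ_i w*_i) maximizes S(w) = w^T e / sqrt(w^T Σ w) over {w ≥ 0 : Σ_i w_i = 1, w^T e > 0}. -/
open Matrix

lemma sharpe_scale (n : ℕ) (Sig : Matrix (Fin n) (Fin n) ℝ) (e : Fin n → ℝ)
    (v : Fin n → ℝ) (t : ℝ) (ht : 0 < t) :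
    ((t • v) ⬝ᵥ e) / Real.sqrt ((t • v) ⬝ᵥ Sig.mulVec (t • v)) =
      (v ⬝ᵥ e) / Real.sqrt (v ⬝ᵥ Sig.mulVec v) := by
  rw [Matrix.mulVec_smul, smul_dotProduct, smul_dotProduct, dotProduct_smul,
    smul_eq_mul, smul_eq_mul, smul_eq_mul, show t * (t * (v ⬝ᵥ Sig.mulVec v)) =
      t ^ 2 * (v ⬝ᵥ Sig.mulVec v) by ring,
    Real.sqrt_mul (sq_nonneg t), Real.sqrt_sq ht.le,
    mul_div_mul_left _ _ (ne_of_gt ht)]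

/-- Quadratic reformulation: a normalized minimum-variance portfolio with fixed
excess return `z > 0` maximizes the Sharpe ratio over nonnegative weights
summing to one with positive excess return. -/
theorem quadratic_reformulation (n : ℕ)
    (Sig : Matrix (Fin n) (Fin n) ℝ) (hSig : Sig.PosDef)
    (e : Fin n → ℝ) (he : ∃ i, 0 < e i) (z : ℝ) (hz : 0 < z)
    (wstar : Fin n → ℝ)
    (hnonneg : ∀ i, 0 ≤ wstar i) (hret : wstar ⬝ᵥ e = z)
    (hopt : ∀ w : Fin n → ℝ, (∀ i, 0 ≤ w i) → w ⬝ᵥ e = z →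
      wstar ⬝ᵥ Sig.mulVec wstar ≤ w ⬝ᵥ Sig.mulVec w)
    (hsum : 0 < ∑ i, wstar i) :
    ∀ w : Fin n → ℝ, (∀ i, 0 ≤ w i) → ∑ i, w i = 1 → 0 < w ⬝ᵥ e →
      (w ⬝ᵥ e) / Real.sqrt (w ⬝ᵥ Sig.mulVec w) ≤
        (((∑ i, wstar i)⁻¹ • wstar) ⬝ᵥ e) /
          Real.sqrt (((∑ i, wstar i)⁻¹ • wstar) ⬝ᵥ
            Sig.mulVec ((∑ i, wstar i)⁻¹ • wstar)) := by
  intro w hw hsw hwe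
  rw [sharpe_scale n Sig e wstar _ (inv_pos.mpr hsum)]
  -- wstar ≠ 0
  have hwsne : wstar ≠ 0 := by
    intro h; rw [h] at hsum; simp at hsum
  have hQs : 0 < wstar ⬝ᵥ Sig.mulVec wstar := by
    have := hSig.dotProduct_mulVec_pos hwsne; simpa using this
  set c : ℝ := z / (w ⬝ᵥ e) with hc
  have hcpos : 0 < c := div_pos hz hwe
  have hce : (c • w) ⬝ᵥ e = z := by
    rw [smul_dotProduct, smul_eq_mul, hc, div_mul_cancel₀ _ (ne_of_gt hwe)]
  have hle : wstar ⬝ᵥ Sig.mulVec wstar ≤ (c • w) ⬝ᵥ Sig.mulVec (c • w) :=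
    hopt _ (fun i => mul_nonneg hcpos.le (hw i)) hce
  have key : ((c • w) ⬝ᵥ e) / Real.sqrt ((c • w) ⬝ᵥ Sig.mulVec (c • w)) ≤
      (wstar ⬝ᵥ e) / Real.sqrt (wstar ⬝ᵥ Sig.mulVec wstar) := by
    rw [hce, hret]
    exact div_le_div_of_nonneg_left hz.le (Real.sqrt_pos.mpr hQs)
      (Real.sqrt_le_sqrt hle)
  calc (w ⬝ᵥ e) / Real.sqrt (w ⬝ᵥ Sig.mulVec w)
      = ((c • w) ⬝ᵥ e) / Real.sqrt ((c • w) ⬝ᵥ Sig.mulVec (c • w)) :=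
        (sharpe_scale n Sig e w c hcpos).symm
    _ ≤ _ := key
end
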